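/- Let 0 < r < s, R_⋆ > 0, and let θ ↦ Υ, Θ, R be constant on an interval I = [a,b) ⊂ [0,2π), with r ≤ Υ ≤ s, R ≥ R_⋆, and |Θ − t| < π/2 with cos(Θ − t) ≥ r/s for all t ∈ I (i.e. the ray Δ_t meets the edge at distance Υ/cos(Θ−t) ∈ [r,s] from the origin). Then for λ ≥ 2√(s³/(r²R_⋆)), the function t ↦ λ²·d̄_λ(t) := λ²[λ²R·cos(Θ−t)·√(1 + 2Υ/(λ²R)) − λ²R·√(1 − sin²(Θ−t)(1 + 2Υ/(λ²R))) − Υ/cos(Θ−t)] is well-defined and Lipschitz continuous on I with Lipschitz constant at most 13·s⁶/(r⁴·R_⋆). -/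

import Mathlib

open Real

set_option maxHeartbeats 1000000 in
/-- on an interval of directions served by a single edge (at distance `Υ` from
the origin, normal angle `Θ`, mark `R`), the rescaled approximate defect
`t ↦ λ²·d̄_λ(t)` is Lipschitz with constant at most `13·s⁶/(r⁴·R⋆)` once
`λ ≥ 2√(s³/(r²R⋆))`. -/
theorem stmt12 (r s Rstar ϒ Θ R a b lam : ℝ)
    (hr : 0 < r) (hrs : r < s) (hRstar : 0 < Rstar)
    (hϒ₁ : r ≤ ϒ) (hϒ₂ : ϒ ≤ s) (hR : Rstar ≤ R)
    (hI : Set.Ico a b ⊆ Set.Ico 0 (2 * π))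
    (hang : ∀ t ∈ Set.Ico a b, |Θ - t| < π / 2 ∧ r / s ≤ Real.cos (Θ - t))
    (hlam : 2 * Real.sqrt (s ^ 3 / (r ^ 2 * Rstar)) ≤ lam) :
    LipschitzOnWith (Real.toNNReal (13 * s ^ 6 / (r ^ 4 * Rstar)))
      (fun t : ℝ => lam ^ 2 *
        (lam ^ 2 * R * Real.cos (Θ - t) * Real.sqrt (1 + 2 * ϒ / (lam ^ 2 * R))
          - lam ^ 2 * R *
            Real.sqrt (1 - Real.sin (Θ - t) ^ 2 * (1 + 2 * ϒ / (lam ^ 2 * R)))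
          - ϒ / Real.cos (Θ - t)))
      (Set.Ico a b) := by
  have hs0 : 0 < s := hr.trans hrs
  have hR0 : 0 < R := lt_of_lt_of_le hRstar hR
  have hϒ0 : 0 < ϒ := lt_of_lt_of_le hr hϒ₁
  have hx : 0 < s ^ 3 / (r ^ 2 * Rstar) := by positivity
  have hlam0 : 0 < lam := lt_of_lt_of_le (by positivity) hlam
  have hlam2 : 4 * (s ^ 3 / (r ^ 2 * Rstar)) ≤ lam ^ 2 := by
    have h := pow_le_pow_left₀ (by positivity) hlam 2
    rw [mul_pow, Real.sq_sqrt hx.le] at h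
    linarith
  have hA0 : 0 < lam ^ 2 * R := mul_pos (pow_pos hlam0 2) hR0
  have hAlb : 4 * s ^ 3 / r ^ 2 ≤ lam ^ 2 * R := by
    have h1 : lam ^ 2 * Rstar ≤ lam ^ 2 * R :=
      mul_le_mul_of_nonneg_left hR (by positivity)
    have h2 : 4 * (s ^ 3 / (r ^ 2 * Rstar)) * Rstar ≤ lam ^ 2 * Rstar :=
      mul_le_mul_of_nonneg_right hlam2 hRstar.le
    have h3 : 4 * (s ^ 3 / (r ^ 2 * Rstar)) * Rstar = 4 * s ^ 3 / r ^ 2 := by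
      field_simp
    linarith
  set ε := 2 * ϒ / (lam ^ 2 * R) with hεdef
  have hε0 : 0 < ε := div_pos (by linarith) hA0
  have hεA : lam ^ 2 * R * ε = 2 * ϒ := by
    rw [hεdef]; field_simp
  have hlamε : lam ^ 2 * ε = 2 * ϒ / R := by
    rw [hεdef]; field_simp
  have hεub : 2 * s ^ 2 * ε ≤ r ^ 2 := by
    have h0 : 2 * s ^ 2 * ε = 4 * s ^ 2 * ϒ / (lam ^ 2 * R) := by
      rw [hεdef]; ring
    rw [h0, div_le_iff₀ hA0]
    have h1 : r ^ 2 * (4 * s ^ 3 / r ^ 2) = 4 * s ^ 3 := by field_simp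
    have h2 : r ^ 2 * (4 * s ^ 3 / r ^ 2) ≤ r ^ 2 * (lam ^ 2 * R) :=
      mul_le_mul_of_nonneg_left hAlb (by positivity)
    have h4 : 4 * s ^ 2 * ϒ ≤ 4 * s ^ 2 * s :=
      mul_le_mul_of_nonneg_left hϒ₂ (by positivity)
    linarith only [h1, h2, h4]
  have hεhalf : ε ≤ 1 / 2 := by nlinarith only [hεub, mul_self_lt_mul_self hr.le hrs, pow_pos hs0 2]
  set p := Real.sqrt (1 + ε) with hpdef
  have hp0 : 0 ≤ p := Real.sqrt_nonneg _
  have hp2 : p ^ 2 = 1 + ε := Real.sq_sqrt (by linarith)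
  have hp1 : 1 ≤ p := by nlinarith only [hp2, hε0.le, hp0]
  have hp54 : p ≤ 5 / 4 := by nlinarith only [hp2, hεhalf, hp0]
  have C0 : (0 : ℝ) ≤ 13 * s ^ 6 / (r ^ 4 * Rstar) := by positivity
  have key : ∀ t ∈ Set.Ico a b,
      HasDerivAt (fun t : ℝ => lam ^ 2 *
          (lam ^ 2 * R * Real.cos (Θ - t) * p
            - lam ^ 2 * R * Real.sqrt (1 - Real.sin (Θ - t) ^ 2 * (1 + ε))
            - ϒ / Real.cos (Θ - t)))
        (lam ^ 2 * (Real.sin (Θ - t) * (lam ^ 2 * R * p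
          - lam ^ 2 * R * (Real.cos (Θ - t) * (1 + ε) /
              Real.sqrt (1 - Real.sin (Θ - t) ^ 2 * (1 + ε)))
          + ϒ / Real.cos (Θ - t) ^ 2))) t ∧
      |lam ^ 2 * (Real.sin (Θ - t) * (lam ^ 2 * R * p
          - lam ^ 2 * R * (Real.cos (Θ - t) * (1 + ε) /
              Real.sqrt (1 - Real.sin (Θ - t) ^ 2 * (1 + ε)))
          + ϒ / Real.cos (Θ - t) ^ 2))| ≤ 13 * s ^ 6 / (r ^ 4 * Rstar) := by
    intro t ht
    obtain ⟨-, hclb⟩ := hang t ht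
    have hc0 : 0 < Real.cos (Θ - t) := lt_of_lt_of_le (by positivity) hclb
    set c := Real.cos (Θ - t) with hcdef
    set S := Real.sin (Θ - t) with hSdef
    have pyth : S ^ 2 + c ^ 2 = 1 := Real.sin_sq_add_cos_sq _
    have hS1 : S ^ 2 ≤ 1 := by linarith only [pyth, sq_nonneg c]
    have hc1 : c ≤ 1 := Real.cos_le_one _
    have hSabs : |S| ≤ 1 := abs_sin_le_one _
    have hrs' : r ≤ c * s := (div_le_iff₀ hs0).mp hclb
    have hcsq : r ^ 2 ≤ s ^ 2 * c ^ 2 := by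
      have h' := mul_le_mul hrs' hrs' hr.le (le_trans hr.le hrs')
      nlinarith only [h']
    have hglb : r ^ 2 ≤ 2 * s ^ 2 * (1 - S ^ 2 * (1 + ε)) := by
      have pyth' : s ^ 2 * S ^ 2 = s ^ 2 - s ^ 2 * c ^ 2 := by
        linear_combination s ^ 2 * pyth
      have hm : s ^ 2 * (S ^ 2 * ε) ≤ s ^ 2 * ε :=
        mul_le_mul_of_nonneg_left (mul_le_of_le_one_left hε0.le hS1) (sq_nonneg s)
      nlinarith only [pyth', hm, hεub, hcsq]
    have hg0 : 0 < 1 - S ^ 2 * (1 + ε) := by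
      nlinarith only [hglb, pow_pos hr 2, pow_pos hs0 2]
    constructor
    · -- derivative
      have hu : HasDerivAt (fun t : ℝ => Θ - t) (-1) t := (hasDerivAt_id t).const_sub Θ
      have hcos : HasDerivAt (fun t : ℝ => Real.cos (Θ - t)) (-Real.sin (Θ - t) * (-1)) t := hu.cos
      have hsin : HasDerivAt (fun t : ℝ => Real.sin (Θ - t)) (Real.cos (Θ - t) * (-1)) t := hu.sin
      have hT1 : HasDerivAt (fun t : ℝ => lam ^ 2 * R * Real.cos (Θ - t) * p)
          ((lam ^ 2 * R * (-Real.sin (Θ - t) * (-1))) * p) t :=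
        (hcos.const_mul (lam ^ 2 * R)).mul_const _
      have hginner : HasDerivAt (fun t : ℝ => 1 - Real.sin (Θ - t) ^ 2 * (1 + ε))
          (-((2 * Real.sin (Θ - t) ^ 1 * (Real.cos (Θ - t) * (-1))) * (1 + ε))) t :=
        ((hsin.pow 2).mul_const _).const_sub 1
      have hT2 : HasDerivAt
          (fun t : ℝ => lam ^ 2 * R * Real.sqrt (1 - Real.sin (Θ - t) ^ 2 * (1 + ε)))
          (lam ^ 2 * R * ((-((2 * Real.sin (Θ - t) ^ 1 * (Real.cos (Θ - t) * (-1))) * (1 + ε))) /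
            (2 * Real.sqrt (1 - Real.sin (Θ - t) ^ 2 * (1 + ε))))) t :=
        (hginner.sqrt hg0.ne').const_mul _
      have hT3 : HasDerivAt (fun t : ℝ => ϒ / Real.cos (Θ - t))
          ((0 * Real.cos (Θ - t) - ϒ * (-Real.sin (Θ - t) * (-1))) / Real.cos (Θ - t) ^ 2) t :=
        (hasDerivAt_const t ϒ).div hcos hc0.ne'
      have h := ((hT1.sub hT2).sub hT3).const_mul (lam ^ 2)
      refine h.congr_deriv ?_; symm
      rw [← hSdef, ← hcdef]
      have hq : Real.sqrt (1 - S ^ 2 * (1 + ε)) ≠ 0 := (Real.sqrt_pos.mpr hg0).ne'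
      field_simp
      ring
    · -- bound
      set q := Real.sqrt (1 - S ^ 2 * (1 + ε)) with hqdef
      have hq0 : 0 < q := Real.sqrt_pos.mpr hg0
      have hq2 : q ^ 2 = 1 - S ^ 2 * (1 + ε) := Real.sq_sqrt hg0.le
      have hqlb : r ≤ 2 * s * q := by
        have h4 : r ^ 2 ≤ (2 * s * q) ^ 2 := by
          have e' : (2 * s * q) ^ 2 = 4 * (s ^ 2 * (1 - S ^ 2 * (1 + ε))) := by
            linear_combination 4 * s ^ 2 * hq2
          have hm := mul_nonneg (sq_nonneg s) hg0.le
          nlinarith only [hglb, e', hm]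
        have h5 : (0 : ℝ) ≤ 2 * s * q := by positivity
        calc r = Real.sqrt (r ^ 2) := (Real.sqrt_sq hr.le).symm
          _ ≤ Real.sqrt ((2 * s * q) ^ 2) := Real.sqrt_le_sqrt h4
          _ = 2 * s * q := Real.sqrt_sq h5
      have hq_le_c : q ≤ c := by
        rw [hqdef, ← Real.sqrt_sq hc0.le]
        exact Real.sqrt_le_sqrt (by linarith only [pyth, mul_nonneg (sq_nonneg S) hε0.le])
      have hcqε : (c - q) * (c + q) = S ^ 2 * ε := by linear_combination pyth - hq2
      have hcqc : (c - q) * c ≤ ε := by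
        nlinarith only [hcqε, mul_nonneg (sub_nonneg.mpr hq_le_c) hq0.le,
          mul_le_of_le_one_left hε0.le hS1]
      have hqcp : 0 < q + c * p :=
        add_pos hq0 (mul_pos hc0 (lt_of_lt_of_le one_pos hp1))
      have hN1 : q ^ 2 - c ^ 2 * p ^ 2 = -ε := by
        linear_combination hq2 - c ^ 2 * hp2 - (1 + ε) * pyth
      have e3 : lam ^ 2 * R * p - lam ^ 2 * R * (c * p ^ 2 / q)
          = -(2 * ϒ * p) / (q * (q + c * p)) := by
        rw [eq_div_iff (by positivity)]
        field_simp
        linear_combination (lam ^ 2 * R) * hN1 - hεA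
      have hcomb : -(2 * ϒ * p) / (q * (q + c * p)) + ϒ / c ^ 2
          = ϒ * (q ^ 2 + c * p * q - 2 * c ^ 2 * p) / (c ^ 2 * (q * (q + c * p))) := by
        field_simp
        ring
      have hBval : lam ^ 2 * (S * (lam ^ 2 * R * p
            - lam ^ 2 * R * (c * (1 + ε) / q) + ϒ / c ^ 2))
          = lam ^ 2 * S * (ϒ * (q ^ 2 + c * p * q - 2 * c ^ 2 * p))
              / (c ^ 2 * (q * (q + c * p))) := by
        rw [← hp2, e3, hcomb]
        ring
      rw [hBval]
      have hden0 : 0 < c ^ 2 * (q * (q + c * p)) :=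
        mul_pos (pow_pos hc0 2) (mul_pos hq0 hqcp)
      rw [abs_div, abs_of_pos hden0, abs_mul, abs_mul,
        abs_of_nonneg (by positivity : (0:ℝ) ≤ lam ^ 2),
        abs_mul, abs_of_pos hϒ0]
      have hNub : |q ^ 2 + c * p * q - 2 * c ^ 2 * p| ≤ 23 / 8 * ε := by
        have hNid : q ^ 2 + c * p * q - 2 * c ^ 2 * p
            = -ε + c * p * (q - c) + c ^ 2 * p * (p - 1) := by linear_combination hN1
        have hpm : (p - 1) * (p + 1) = ε := by linear_combination hp2
        have hpmub : p - 1 ≤ ε / 2 := by nlinarith only [hpm, hp1, sq_nonneg (p - 1)]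
        have ht1u : c * p * (q - c) ≤ 0 :=
          mul_nonpos_of_nonneg_of_nonpos (mul_nonneg hc0.le hp0)
            (by linarith [hq_le_c])
        have a1 : p * ((c - q) * c) ≤ p * ε := mul_le_mul_of_nonneg_left hcqc hp0
        have a2 : p * ε ≤ 5 / 4 * ε := mul_le_mul_of_nonneg_right hp54 hε0.le
        have ht1l : -(5 / 4 * ε) ≤ c * p * (q - c) := by nlinarith only [a1, a2]
        have hc2 : c ^ 2 ≤ 1 := by linarith only [pyth, sq_nonneg S]
        have b1 : c ^ 2 * (p * (p - 1)) ≤ 1 * (p * (p - 1)) :=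
          mul_le_mul_of_nonneg_right hc2 (mul_nonneg hp0 (by linarith))
        have b2 : p * (p - 1) ≤ 5 / 4 * (ε / 2) :=
          mul_le_mul hp54 hpmub (by linarith) (by norm_num)
        have ht2l : 0 ≤ c ^ 2 * p * (p - 1) :=
          mul_nonneg (mul_nonneg (sq_nonneg c) hp0) (by linarith)
        have ht2u : c ^ 2 * p * (p - 1) ≤ 5 / 8 * ε := by nlinarith only [b1, b2]
        rw [hNid, abs_le]
        constructor <;> linarith only [ht1l, ht1u, ht2l, ht2u, hε0.le]
      have hdenlb : r ^ 4 / (2 * s ^ 4) ≤ c ^ 2 * (q * (q + c * p)) := by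
        have h1 : r ^ 2 / s ^ 2 ≤ c ^ 2 := by
          rw [div_le_iff₀ (by positivity)]; nlinarith only [hcsq]
        have h2 : r / (2 * s) ≤ q := by
          rw [div_le_iff₀ (by positivity)]; nlinarith only [hqlb]
        have h3 : r / s ≤ q + c * p := by
          have hcp : c ≤ c * p := le_mul_of_one_le_right hc0.le hp1
          rw [div_le_iff₀ hs0]
          nlinarith only [hrs', mul_nonneg (sub_nonneg.mpr hcp) hs0.le,
            mul_nonneg hq0.le hs0.le]
        calc r ^ 4 / (2 * s ^ 4) = (r ^ 2 / s ^ 2) * ((r / (2 * s)) * (r / s)) := by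
              field_simp
          _ ≤ c ^ 2 * (q * (q + c * p)) :=
            mul_le_mul h1 (mul_le_mul h2 h3 (by positivity) hq0.le)
              (by positivity) (sq_nonneg c)
      have hnumub : lam ^ 2 * |S| * (ϒ * |q ^ 2 + c * p * q - 2 * c ^ 2 * p|)
          ≤ lam ^ 2 * ε * (23 / 8 * s) := by
        have h' : |S| * (ϒ * |q ^ 2 + c * p * q - 2 * c ^ 2 * p|) ≤ 1 * (s * (23 / 8 * ε)) :=
          mul_le_mul hSabs
            (mul_le_mul hϒ₂ hNub (abs_nonneg _) hs0.le) (by positivity) one_pos.le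
        nlinarith only [mul_le_mul_of_nonneg_left h' (sq_nonneg lam)]
      calc lam ^ 2 * |S| * (ϒ * |q ^ 2 + c * p * q - 2 * c ^ 2 * p|)
            / (c ^ 2 * (q * (q + c * p)))
          ≤ (lam ^ 2 * ε * (23 / 8 * s)) / (r ^ 4 / (2 * s ^ 4)) :=
            div_le_div₀ (by positivity) hnumub (by positivity) hdenlb
        _ = (lam ^ 2 * ε) * (23 / 4 * (s ^ 5 / r ^ 4)) := by field_simp; ring
        _ ≤ (2 * s / Rstar) * (23 / 4 * (s ^ 5 / r ^ 4)) := by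
            refine mul_le_mul_of_nonneg_right ?_ (by positivity)
            rw [hlamε]
            exact div_le_div₀ (by positivity) (by linarith) hRstar hR
        _ ≤ 13 * s ^ 6 / (r ^ 4 * Rstar) := by
            have he : (2 * s / Rstar) * (23 / 4 * (s ^ 5 / r ^ 4))
                = 23 / 2 * (s ^ 6 / (r ^ 4 * Rstar)) := by field_simp; ring
            have he2 : 13 * s ^ 6 / (r ^ 4 * Rstar) = 13 * (s ^ 6 / (r ^ 4 * Rstar)) := by ring
            rw [he, he2]
            exact mul_le_mul_of_nonneg_right (by norm_num) (by positivity)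
  refine (convex_Ico a b).lipschitzOnWith_of_nnnorm_hasDerivWithin_le
    (f' := fun t : ℝ => lam ^ 2 * (Real.sin (Θ - t) * (lam ^ 2 * R * p
      - lam ^ 2 * R * (Real.cos (Θ - t) * (1 + ε) /
          Real.sqrt (1 - Real.sin (Θ - t) ^ 2 * (1 + ε)))
      + ϒ / Real.cos (Θ - t) ^ 2)))
    (fun t ht => ((key t ht).1).hasDerivWithinAt) (fun t ht => ?_)
  rw [← NNReal.coe_le_coe, coe_nnnorm, Real.coe_toNNReal _ C0, Real.norm_eq_abs]
  exact (key t ht).2
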